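/- CSS Cleaning Lemma: Let P^X = F_2^n and P^Z = F_2^n with the standard bilinear pairing ⟨x,z⟩ = Σ_i x_i z_i. Let G^X ≤ P^X and G^Z ≤ P^Z be subspaces, and set S^Z = G^Z ∩ (G^X)^⊥ and S^X = G^X ∩ (G^Z)^⊥ (annihilators under the pairing). Assume k := n − dim G^X − dim S^Z = n − dim G^Z − dim S^X. For a partition of coordinates into M and M^c, define g_bare^Z(M) = dim((G^X)^⊥ ∩ P^Z_M) − dim(S^Z ∩ P^Z_M) and g^X(M^c) = dim((S^Z)^⊥ ∩ P^X_{M^c}) − dim(G^X ∩ P^X_{M^c}). Then g_bare^Z(M) + g^X(M^c) = k. -/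

import Mathlib

open Module

def suppSub {n : ℕ} (M : Set (Fin n)) : Submodule (ZMod 2) (Fin n → ZMod 2) where
  carrier := {v | ∀ i ∉ M, v i = 0}
  add_mem' := by
    intro a b ha hb i hi
    simp [ha i hi, hb i hi]
  zero_mem' := by intro i _; rfl
  smul_mem' := by
    intro c a ha i hi
    simp [ha i hi]

def pairPerp {n : ℕ} (W : Submodule (ZMod 2) (Fin n → ZMod 2)) :
    Submodule (ZMod 2) (Fin n → ZMod 2) where
  carrier := {z | ∀ x ∈ W, ∑ i, x i * z i = 0}
  add_mem' := by
    intro a b ha hb x hx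
    simp only [Pi.add_apply, mul_add, Finset.sum_add_distrib, ha x hx, hb x hx, add_zero]
  zero_mem' := by intro x _; simp
  smul_mem' := by
    intro c a ha x hx
    simp only [Pi.smul_apply, smul_eq_mul, mul_left_comm, ← Finset.mul_sum, ha x hx, mul_zero]

namespace CSSAux

variable {n : ℕ}

/-- The standard dot-product bilinear form on `F_2^n`. -/
noncomputable def dotB (n : ℕ) : LinearMap.BilinForm (ZMod 2) (Fin n → ZMod 2) :=
  LinearMap.mk₂ (ZMod 2) (fun x z => ∑ i, x i * z i)
    (fun a b z => by simp [add_mul, Finset.sum_add_distrib])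
    (fun c a z => by simp [Finset.mul_sum, mul_assoc])
    (fun x a b => by simp [mul_add, Finset.sum_add_distrib])
    (fun c x a => by simp [Finset.mul_sum, mul_left_comm])

@[simp] lemma dotB_apply (x z : Fin n → ZMod 2) : dotB n x z = ∑ i, x i * z i := rfl

lemma dotB_comm (x z : Fin n → ZMod 2) : dotB n x z = dotB n z x := by
  simp [mul_comm]

lemma dotB_isRefl : (dotB n).IsRefl := fun x z h => by rw [dotB_comm]; exact h

lemma dotB_single (i : Fin n) (z : Fin n → ZMod 2) : dotB n (Pi.single i 1) z = z i := by
  simp only [dotB_apply]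
  rw [Finset.sum_eq_single i]
  · simp
  · intro j _ hj; simp [Pi.single_apply, hj]
  · simp

lemma dotB_nondegenerate : (dotB n).Nondegenerate := by
  constructor
  · intro x hx
    ext i
    have := hx (Pi.single i 1)
    rw [dotB_comm] at this
    rw [dotB_single] at this
    simp [this]
  · intro x hx
    ext i
    have := hx (Pi.single i 1)
    rw [dotB_single] at this
    simp [this]

lemma pairPerp_eq_orthogonal (W : Submodule (ZMod 2) (Fin n → ZMod 2)) :
    pairPerp W = (dotB n).orthogonal W := rfl

lemma finrank_pairPerp (W : Submodule (ZMod 2) (Fin n → ZMod 2)) :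
    finrank (ZMod 2) (pairPerp W) + finrank (ZMod 2) W = n := by
  rw [pairPerp_eq_orthogonal,
    LinearMap.BilinForm.finrank_orthogonal dotB_nondegenerate]
  have h1 : finrank (ZMod 2) W ≤ finrank (ZMod 2) (Fin n → ZMod 2) :=
    Submodule.finrank_le W
  have h2 : finrank (ZMod 2) (Fin n → ZMod 2) = n := by simp
  omega

lemma pairPerp_sup (U V : Submodule (ZMod 2) (Fin n → ZMod 2)) :
    pairPerp (U ⊔ V) = pairPerp U ⊓ pairPerp V := by
  ext z
  constructor
  · intro hz
    exact ⟨fun x hx => hz x (Submodule.mem_sup_left hx),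
      fun x hx => hz x (Submodule.mem_sup_right hx)⟩
  · rintro ⟨h1, h2⟩ x hx
    obtain ⟨u, hu, v, hv, rfl⟩ := Submodule.mem_sup.mp hx
    have : ∑ i, (u + v) i * z i = ∑ i, u i * z i + ∑ i, v i * z i := by
      simp [add_mul, Finset.sum_add_distrib]
    rw [this, h1 u hu, h2 v hv, add_zero]

lemma pairPerp_suppSub (M : Set (Fin n)) : pairPerp (suppSub M) = suppSub Mᶜ := by
  ext z
  constructor
  · intro hz i hi
    have hiM : i ∈ M := by simpa using hi
    have hs : (Pi.single i 1 : Fin n → ZMod 2) ∈ suppSub M := by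
      intro j hj
      have : j ≠ i := fun h => hj (h ▸ hiM)
      simp [Pi.single_apply, this]
    have := hz (Pi.single i 1) hs
    rwa [show ∑ j, (Pi.single i 1 : Fin n → ZMod 2) j * z j = z i from dotB_single i z] at this
  · intro hz x hx
    apply Finset.sum_eq_zero
    intro i _
    by_cases hi : i ∈ M
    · rw [hz i (by simpa using hi), mul_zero]
    · rw [hx i hi, zero_mul]

/-- The key identity. -/
lemma key (W : Submodule (ZMod 2) (Fin n → ZMod 2)) (M : Set (Fin n)) :
    finrank (ZMod 2) (pairPerp W ⊓ suppSub M : Submodule (ZMod 2) (Fin n → ZMod 2))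
      + finrank (ZMod 2) W + finrank (ZMod 2) (suppSub Mᶜ)
      = n + finrank (ZMod 2) (W ⊓ suppSub Mᶜ : Submodule (ZMod 2) (Fin n → ZMod 2)) := by
    have h1 : pairPerp W ⊓ suppSub M = pairPerp (W ⊔ suppSub Mᶜ) := by
      rw [pairPerp_sup, pairPerp_suppSub, compl_compl]
    have h2 := finrank_pairPerp (W ⊔ suppSub Mᶜ)
    have h3 := Submodule.finrank_sup_add_finrank_inf_eq W (suppSub Mᶜ)
    rw [h1]
    omega

end CSSAux

theorem stmt6 (n : ℕ) (GX GZ : Submodule (ZMod 2) (Fin n → ZMod 2))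
    (SZ SX : Submodule (ZMod 2) (Fin n → ZMod 2))
    (hSZ : SZ = GZ ⊓ pairPerp GX) (hSX : SX = GX ⊓ pairPerp GZ)
    (k : ℕ)
    (hkX : k + finrank (ZMod 2) GX + finrank (ZMod 2) SZ = n)
    (hkZ : k + finrank (ZMod 2) GZ + finrank (ZMod 2) SX = n)
    (M : Set (Fin n)) :
    (finrank (ZMod 2) (pairPerp GX ⊓ suppSub M : Submodule (ZMod 2) (Fin n → ZMod 2))
        - finrank (ZMod 2) (SZ ⊓ suppSub M : Submodule (ZMod 2) (Fin n → ZMod 2)))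
      + (finrank (ZMod 2) (pairPerp SZ ⊓ suppSub Mᶜ : Submodule (ZMod 2) (Fin n → ZMod 2))
        - finrank (ZMod 2) (GX ⊓ suppSub Mᶜ : Submodule (ZMod 2) (Fin n → ZMod 2))) = k := by
  classical
  -- SZ ≤ pairPerp GX
  have hSZle : SZ ≤ pairPerp GX := by rw [hSZ]; exact inf_le_right
  -- GX ≤ pairPerp SZ
  have hGXle : GX ≤ pairPerp SZ := by
    intro x hx z hz
    have := hSZle hz x hx
    calc ∑ i, z i * x i = ∑ i, x i * z i := by simp [mul_comm]
    _ = 0 := this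
  have hb : finrank (ZMod 2) (SZ ⊓ suppSub M : Submodule (ZMod 2) (Fin n → ZMod 2))
      ≤ finrank (ZMod 2) (pairPerp GX ⊓ suppSub M : Submodule (ZMod 2) (Fin n → ZMod 2)) :=
    Submodule.finrank_mono (inf_le_inf_right _ hSZle)
  have hd : finrank (ZMod 2) (GX ⊓ suppSub Mᶜ : Submodule (ZMod 2) (Fin n → ZMod 2))
      ≤ finrank (ZMod 2) (pairPerp SZ ⊓ suppSub Mᶜ : Submodule (ZMod 2) (Fin n → ZMod 2)) :=
    Submodule.finrank_mono (inf_le_inf_right _ hGXle)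
  have k1 := CSSAux.key GX M
  have k2 := CSSAux.key SZ Mᶜ
  rw [compl_compl] at k2
  have hmm : finrank (ZMod 2) (suppSub M : Submodule (ZMod 2) (Fin n → ZMod 2))
      + finrank (ZMod 2) (suppSub Mᶜ : Submodule (ZMod 2) (Fin n → ZMod 2)) = n := by
    have := CSSAux.finrank_pairPerp (suppSub Mᶜ : Submodule (ZMod 2) (Fin n → ZMod 2))
    rwa [CSSAux.pairPerp_suppSub, compl_compl] at this
  omega
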